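/- Let Λ be a finite dimensional algebra with an n-cluster tilting object M in mod Λ. Then gl.dim Λ = id M_Λ (the injective dimension of M as a right Λ-module). Moreover, every indecomposable direct summand X of M is either projective or satisfies pd X_Λ ≥ n. -/

import Mathlib

noncomputable section

open CategoryTheory ModuleCat Limits Opposite

universe u

variable (k : Type u) [Field k] (A : Type u) [Ring A] [Algebra k A]

/-- The Ext group `Ext_A^n(X, Y)` of (left) `A`-modules, as a `k`-module. -/
def extGrp (n : ℕ) (X Y : ModuleCat.{u} A) : ModuleCat.{u} k :=
  ((Ext k (ModuleCat.{u} A) n).obj (op X)).obj Y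

/-- Vanishing of `Ext^n_A(X,Y)`. -/
def extZero (n : ℕ) (X Y : ModuleCat.{u} A) : Prop :=
  Subsingleton (extGrp k A n X Y)

/-- The global dimension of `A` is at most `d`. -/
def gldimLE (d : ℕ) : Prop :=
  ∀ i : ℕ, d < i → ∀ X Y : ModuleCat.{u} A, extZero k A i X Y

/-- The projective dimension of `X` is at most `d`. -/
def pdLE (X : ModuleCat.{u} A) (d : ℕ) : Prop :=
  ∀ i : ℕ, d < i → ∀ Y : ModuleCat.{u} A, extZero k A i X Y

/-- The injective dimension of `X` is at most `d`. -/
def idLE (X : ModuleCat.{u} A) (d : ℕ) : Prop :=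
  ∀ i : ℕ, d < i → ∀ Y : ModuleCat.{u} A, extZero k A i Y X

/-- `X` belongs to the additive closure `add S` of the class of modules `S`. -/
def InAdd (S : Set (ModuleCat.{u} A)) (X : ModuleCat.{u} A) : Prop :=
  ∃ (Y : ModuleCat.{u} A) (m : ℕ) (f : Fin m → ModuleCat.{u} A),
    (∀ i, f i ∈ S) ∧ Nonempty ((X ⊞ Y) ≅ ⨁ f)

/-- `X` is a direct summand of `M`. -/
def IsSummand (X M : ModuleCat.{u} A) : Prop :=
  ∃ Y : ModuleCat.{u} A, Nonempty (M ≅ X ⊞ Y)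

/-- `X` is an indecomposable (in particular nonzero) module. -/
def Indec (X : ModuleCat.{u} A) : Prop :=
  ¬ IsZero X ∧ ∀ Y Z : ModuleCat.{u} A, Nonempty (X ≅ Y ⊞ Z) → IsZero Y ∨ IsZero Z

/-- `C` is an `n`-cluster tilting subcategory of the category `mod A` of finitely
generated `A`-modules: it consists of finitely generated modules, it is functorially
finite in `mod A`, and it coincides with both `Ext`-perpendicular classes. -/
def IsNCT (n : ℕ) (C : Set (ModuleCat.{u} A)) : Prop :=
  (∀ X ∈ C, Module.Finite A X) ∧
  (∀ X : ModuleCat.{u} A, Module.Finite A X →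
    ∃ C₀ ∈ C, ∃ f : C₀ ⟶ X, ∀ C₁ ∈ C, ∀ g : C₁ ⟶ X, ∃ h : C₁ ⟶ C₀, h ≫ f = g) ∧
  (∀ X : ModuleCat.{u} A, Module.Finite A X →
    ∃ C₀ ∈ C, ∃ f : X ⟶ C₀, ∀ C₁ ∈ C, ∀ g : X ⟶ C₁, ∃ h : C₀ ⟶ C₁, f ≫ h = g) ∧
  (∀ X : ModuleCat.{u} A, X ∈ C ↔
    (Module.Finite A X ∧ ∀ i : ℕ, 0 < i → i < n → ∀ Y ∈ C, extZero k A i X Y)) ∧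
  (∀ X : ModuleCat.{u} A, X ∈ C ↔
    (Module.Finite A X ∧ ∀ i : ℕ, 0 < i → i < n → ∀ Y ∈ C, extZero k A i Y X))

/-- `M` is an `n`-cluster tilting object of `mod A`. -/
def IsNCTObject (n : ℕ) (M : ModuleCat.{u} A) : Prop :=
  Module.Finite A M ∧ IsNCT k A n {X | InAdd A {M} X}

namespace CT


variable {A}

/-- Helper: subsingleton from `IsZero`. -/
lemma subsingleton_of_isZero {R : Type u} [Ring R] {W : ModuleCat.{u} R} (h : IsZero W) :
    Subsingleton W := by
  have h0 : (𝟙 W) = 0 := h.eq_of_src _ _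
  exact ⟨fun a b => by
    have hx : ∀ x : W, x = 0 := fun x => by
      have := congrArg (fun (φ : W ⟶ W) => φ x) h0; simpa using this
    rw [hx a, hx b]⟩

lemma subsingleton_iff_of_iso {R : Type u} [Ring R] {V W : ModuleCat.{u} R} (e : V ≅ W) :
    Subsingleton V ↔ Subsingleton W :=
  Equiv.subsingleton_congr ((forget _).mapIso e).toEquiv

/-- A concrete projective resolution of `X`. -/
structure CRes (X : ModuleCat.{u} A) where
  P : ℕ → ModuleCat.{u} A
  proj : ∀ j, Projective (P j)
  d : ∀ j, P (j + 1) ⟶ P j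
  pi : P 0 ⟶ X
  dd : ∀ j, d (j + 1) ≫ d j = 0
  dpi : d 0 ≫ pi = 0
  surj : Function.Surjective (pi)
  exact0 : ∀ x : P 0, pi x = 0 → ∃ y, d 0 y = x
  exact : ∀ j, ∀ x : P (j + 1), d j x = 0 → ∃ y, d (j + 1) y = x

namespace CRes

variable {X : ModuleCat.{u} A} (R : CRes X)

/-- The chain complex of a concrete resolution. -/
def complex : ChainComplex (ModuleCat.{u} A) ℕ :=
  ChainComplex.of R.P R.d R.dd

@[simp] lemma complex_X (n : ℕ) : R.complex.X n = R.P n := rfl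
@[simp] lemma complex_d (n : ℕ) : R.complex.d (n + 1) n = R.d n :=
  ChainComplex.of_d _ _ _

/-- The augmentation map as a chain map to the single complex. -/
def resPi : R.complex ⟶ (ChainComplex.single₀ (ModuleCat.{u} A)).obj X :=
  (ChainComplex.toSingle₀Equiv _ _).symm ⟨R.pi, by rw [R.complex_d 0]; exact R.dpi⟩

@[simp] lemma resPi_f_zero : R.resPi.f 0 = R.pi :=
  ChainComplex.toSingle₀Equiv_symm_apply_f_zero _ _

/-- The associated `ProjectiveResolution`. -/
def toRes : ProjectiveResolution X where
  complex := R.complex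
  projective n := R.proj n
  π := R.resPi
  quasiIso := ⟨fun n => by
    have epi : Epi R.pi := (ModuleCat.epi_iff_surjective _).2 R.surj
    cases n with
    | zero =>
      rw [ChainComplex.quasiIsoAt₀_iff, ShortComplex.quasiIso_iff_of_zeros']
      · constructor
        · rw [ShortComplex.moduleCat_exact_iff]
          intro (x : R.P 0) hx
          have hx' : R.pi x = 0 := by
            have : R.resPi.f 0 x = 0 := hx
            rwa [R.resPi_f_zero] at this
          obtain ⟨y, hy⟩ := R.exact0 x hx'
          refine ⟨y, ?_⟩
          show R.complex.d 1 0 y = x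
          rw [R.complex_d 0]; exact hy
        · have : ((HomologicalComplex.shortComplexFunctor' (ModuleCat.{u} A) _ 1 0 0).map
              R.resPi).τ₂ = R.pi := R.resPi_f_zero
          show Epi _
          rw [this]; exact epi
      all_goals rfl
    | succ n =>
      rw [quasiIsoAt_iff_exactAt']
      · rw [HomologicalComplex.exactAt_iff' _ (n + 2) (n + 1) n (by simp) (by simp)]
        rw [ShortComplex.moduleCat_exact_iff]
        intro (x : R.P (n+1)) hx
        have hx' : R.d n x = 0 := by
          have h2 : R.complex.d (n+1) n x = 0 := hx
          rwa [R.complex_d n] at h2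
        obtain ⟨y, hy⟩ := R.exact n x hx'
        refine ⟨y, ?_⟩
        show R.complex.d (n+2) (n+1) y = x
        rw [R.complex_d (n+1)]; exact hy
      · apply ChainComplex.exactAt_succ_single_obj⟩

end CRes

/-- The main computation: `Ext^{j+1}(X, Y) = 0` iff every cycle is a boundary in the
concrete resolution. -/
lemma extZero_iff {X : ModuleCat.{u} A} (R : CRes X) (Y : ModuleCat.{u} A) (j : ℕ) :
    extZero k A (j + 1) X Y ↔
      ∀ f : R.P (j + 1) ⟶ Y, R.d (j + 1) ≫ f = 0 →
        ∃ g : R.P j ⟶ Y, R.d j ≫ g = f := by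
  have e := (R.toRes).isoExt (R := k) (j + 1) Y
  unfold extZero extGrp
  rw [subsingleton_iff_of_iso e]
  have hcx : R.toRes.complex = R.complex := rfl
  rw [hcx]
  set K := R.complex.linearYonedaObj k Y with hK
  have h1 : Subsingleton (K.homology (j + 1)) ↔ IsZero (K.homology (j + 1)) :=
    ⟨fun h => ModuleCat.isZero_of_subsingleton _, fun h => subsingleton_of_isZero h⟩
  rw [h1, ← HomologicalComplex.exactAt_iff_isZero_homology,
    HomologicalComplex.exactAt_iff' _ j (j + 1) (j + 2) (by simp) (by simp),
    ShortComplex.moduleCat_exact_iff]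
  constructor
  · intro h f hf
    obtain ⟨g, hg⟩ := h f (by
      show R.complex.d (j + 1+1) (j+1) ≫ f = 0
      rw [R.complex_d (j+1)]; exact hf)
    refine ⟨g, ?_⟩
    have : R.complex.d (j + 1) j ≫ g = f := hg
    rwa [R.complex_d j] at this
  · intro h f hf
    have hf' : R.d (j + 1) ≫ f = 0 := by
      have : R.complex.d (j + 2) (j + 1) ≫ f = 0 := hf
      rwa [R.complex_d (j+1)] at this
    obtain ⟨g, hg⟩ := h f hf'
    refine ⟨g, ?_⟩
    show R.complex.d (j + 1) j ≫ g = f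
    rwa [R.complex_d j]


section Gen


/-- A concrete short exact sequence of `A`-modules. -/
structure SES (K B X : ModuleCat.{u} A) where
  ι : K ⟶ B
  π : B ⟶ X
  inj : Function.Injective ι
  surj : Function.Surjective π
  comp : ι ≫ π = 0
  exact : ∀ b, π b = 0 → ∃ z, ι z = b

namespace SES

variable {K B X : ModuleCat.{u} A} (S : SES K B X)

lemma pi_iota (z : K) : S.π (S.ι z) = 0 := by
  have := congrArg (fun (φ : K ⟶ X) => φ z) S.comp
  simpa using this

/-- Factor a morphism with `u ≫ π = 0` through `ι`. -/
def lift {P : ModuleCat.{u} A} (u : P ⟶ B) (h : ∀ p, S.π (u p) = 0) : P ⟶ K :=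
  ModuleCat.ofHom ((LinearEquiv.ofInjective S.ι.hom S.inj).symm.toLinearMap.comp
    (LinearMap.codRestrict (LinearMap.range S.ι.hom) u.hom
      (fun p => by
        obtain ⟨z, hz⟩ := S.exact (u p) (h p)
        exact ⟨z, hz⟩)))

lemma lift_iota {P : ModuleCat.{u} A} (u : P ⟶ B) (h : ∀ p, S.π (u p) = 0) (p : P) :
    S.ι (S.lift u h p) = u p := by
  set e := LinearEquiv.ofInjective S.ι.hom S.inj with he
  have key : ∀ z : LinearMap.range S.ι.hom, S.ι (e.symm z) = (z : B) := by
    intro z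
    have h1 : e (e.symm z) = z := e.apply_symm_apply z
    have h2 : (e (e.symm z) : B) = S.ι (e.symm z) := by
      rw [he]; rfl
    calc S.ι (e.symm z) = (e (e.symm z) : B) := h2.symm
    _ = (z : B) := by rw [h1]
  exact key _

lemma lift_comp_iota {P : ModuleCat.{u} A} (u : P ⟶ B) (h : ∀ p, S.π (u p) = 0) :
    S.lift u h ≫ S.ι = u := by
  apply ModuleCat.hom_ext; apply LinearMap.ext; intro p
  exact S.lift_iota u h p

end SES

/-- Descend a morphism along a surjection whose kernel it kills. -/
def descend {B X V : ModuleCat.{u} A} (π : B ⟶ X) (hs : Function.Surjective π)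
    (u : B ⟶ V) (h : ∀ b, π b = 0 → u b = 0) : X ⟶ V :=
  ModuleCat.ofHom ((Submodule.liftQ (LinearMap.ker π.hom) u.hom
    (fun b hb => h b hb)).comp
    (π.hom.quotKerEquivOfSurjective hs).symm.toLinearMap)

lemma descend_apply {B X V : ModuleCat.{u} A} (π : B ⟶ X) (hs : Function.Surjective π)
    (u : B ⟶ V) (h : ∀ b, π b = 0 → u b = 0) (b : B) :
    descend π hs u h (π b) = u b := by
  set e := π.hom.quotKerEquivOfSurjective hs with he
  have h1 : e.symm (π b) = Submodule.Quotient.mk b := by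
    apply e.injective
    rw [e.apply_symm_apply]
    rw [he]
    simp [LinearMap.quotKerEquivOfSurjective, LinearMap.quotKerEquivRange]
  show (Submodule.liftQ (LinearMap.ker π.hom) u.hom
      (fun b hb => h b hb)) (e.symm (π b)) = u b
  rw [h1]
  exact Submodule.liftQ_apply _ _ _

lemma descend_comp {B X V : ModuleCat.{u} A} (π : B ⟶ X) (hs : Function.Surjective π)
    (u : B ⟶ V) (h : ∀ b, π b = 0 → u b = 0) :
    π ≫ descend π hs u h = u := by
  apply ModuleCat.hom_ext; apply LinearMap.ext; intro b
  exact descend_apply π hs u h b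



/-- The free module on the underlying type of `Y`. -/
def fcover (Y : ModuleCat.{u} A) : ModuleCat.{u} A := ModuleCat.of A (Y →₀ A)

instance fcover_projective (Y : ModuleCat.{u} A) : Projective (fcover Y) :=
  ModuleCat.projective_of_free (ι := Y) Finsupp.basisSingleOne

/-- The canonical surjection from the free module. -/
def fcoverπ (Y : ModuleCat.{u} A) : fcover Y ⟶ Y :=
  ModuleCat.ofHom (Finsupp.linearCombination A (_root_.id : Y → Y))

lemma fcoverπ_surj (Y : ModuleCat.{u} A) : Function.Surjective (fcoverπ Y) := by
  intro y
  refine ⟨Finsupp.single y 1, ?_⟩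
  show Finsupp.linearCombination A (_root_.id : Y → Y) (Finsupp.single y 1) = y
  rw [Finsupp.linearCombination_single, one_smul]
  rfl

/-- Syzygy modules of the canonical free resolution. -/
def sz (X : ModuleCat.{u} A) : ℕ → ModuleCat.{u} A
  | 0 => X
  | (j+1) => ModuleCat.of A (LinearMap.ker (fcoverπ (sz X j)).hom)

/-- Inclusion of the `j+1`-st syzygy in the `j`-th free module. -/
def szι (X : ModuleCat.{u} A) (j : ℕ) : sz X (j + 1) ⟶ fcover (sz X j) :=
  ModuleCat.ofHom (LinearMap.ker (fcoverπ (sz X j)).hom).subtype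

lemma szι_inj (X : ModuleCat.{u} A) (j : ℕ) : Function.Injective (szι X j) :=
  Subtype.val_injective

lemma szι_mem (X : ModuleCat.{u} A) (j : ℕ) (z : sz X (j + 1)) :
    fcoverπ (sz X j) (szι X j z) = 0 := z.2


/-- The canonical free resolution of an arbitrary module. -/
def freeRes (X : ModuleCat.{u} A) : CRes X where
  P j := fcover (sz X j)
  proj j := fcover_projective _
  d j := fcoverπ (sz X (j + 1)) ≫ szι X j
  pi := fcoverπ (sz X 0)
  dd j := by
    apply ModuleCat.hom_ext; apply LinearMap.ext; intro x
    show szι X j (fcoverπ (sz X (j+1)) (szι X (j+1) (fcoverπ (sz X (j+2)) x))) = 0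
    have h0 : fcoverπ (sz X (j+1)) (szι X (j+1) (fcoverπ (sz X (j+2)) x)) = 0 :=
      szι_mem X (j+1) _
    rw [h0]
    simp [szι]
  dpi := by
    apply ModuleCat.hom_ext; apply LinearMap.ext; intro x
    show fcoverπ (sz X 0) (szι X 0 (fcoverπ (sz X 1) x)) = 0
    exact szι_mem X 0 _
  surj := fcoverπ_surj _
  exact0 := by
    intro x hx
    obtain ⟨y, hy⟩ := fcoverπ_surj (sz X 1) (⟨x, hx⟩ :
      LinearMap.ker (fcoverπ (sz X 0)).hom)
    exact ⟨y, by show szι X 0 (fcoverπ (sz X 1) y) = x; rw [hy]; rfl⟩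
  exact := by
    intro j x hx
    have hx' : fcoverπ (sz X (j+1)) x = 0 := by
      have : szι X j (fcoverπ (sz X (j+1)) x) = 0 := hx
      exact szι_inj X j (by simpa [szι] using this)
    obtain ⟨y, hy⟩ := fcoverπ_surj (sz X (j+2)) (⟨x, hx'⟩ :
      LinearMap.ker (fcoverπ (sz X (j+1))).hom)
    exact ⟨y, by show szι X (j+1) (fcoverπ (sz X (j+2)) y) = x; rw [hy]; rfl⟩

/-- Appending a projective module over a short exact sequence to a resolution of the kernel. -/
def CRes.append {K B X : ModuleCat.{u} A} (S : SES K B X) (hB : Projective B)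
    (Q : CRes K) : CRes X where
  P j := match j with
    | 0 => B
    | (j+1) => Q.P j
  proj j := match j with
    | 0 => hB
    | (j+1) => Q.proj j
  d j := match j with
    | 0 => Q.pi ≫ S.ι
    | (j+1) => Q.d j
  pi := S.π
  dd j := match j with
    | 0 => by
      show Q.d 0 ≫ (Q.pi ≫ S.ι) = 0
      rw [← Category.assoc, Q.dpi, Limits.zero_comp]
    | (j+1) => Q.dd j
  dpi := by
    show (Q.pi ≫ S.ι) ≫ S.π = 0
    rw [Category.assoc, S.comp, Limits.comp_zero]
  surj := S.surj
  exact0 := by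
    intro b hb
    obtain ⟨z, hz⟩ := S.exact b hb
    obtain ⟨q, hq⟩ := Q.surj z
    exact ⟨q, by show S.ι (Q.pi q) = b; rw [hq, hz]⟩
  exact j := match j with
    | 0 => by
      intro x hx
      have hx' : Q.pi x = 0 := S.inj (by
        show S.ι (Q.pi x) = S.ι 0
        rw [map_zero]; exact hx)
      obtain ⟨y, hy⟩ := Q.exact0 x hx'
      exact ⟨y, hy⟩
    | (j+1) => by
      intro x hx
      exact Q.exact j x hx

section ExtLemmas

variable {K B X W Y Z : ModuleCat.{u} A}

lemma cancel_iota {K B X : ModuleCat.{u} A} (S : SES K B X) {P : ModuleCat.{u} A}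
    {u v : P ⟶ K} (h : u ≫ S.ι = v ≫ S.ι) : u = v := by
  apply ModuleCat.hom_ext; apply LinearMap.ext; intro p
  apply S.inj
  exact congrArg (fun (φ : P ⟶ B) => φ p) h

lemma comp_zero_pointwise {P Q R' : ModuleCat.{u} A} {u : P ⟶ Q} {v : Q ⟶ R'}
    (h : u ≫ v = 0) : ∀ p, v (u p) = 0 := fun p =>
  congrArg (fun (φ : P ⟶ R') => φ p) h

/-- Ext vanishing for projective modules. -/
lemma extZero_of_projective (X Y : ModuleCat.{u} A) (hX : Projective X) (j : ℕ) :
    extZero k A (j + 1) X Y := by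
  have := isZero_Ext_succ_of_projective (R := k) X Y j
  exact subsingleton_of_isZero this

/-- Dimension shifting along a short exact sequence with projective middle. -/
lemma extZero_shift {K B X : ModuleCat.{u} A} (S : SES K B X) (hB : Projective B)
    (Y : ModuleCat.{u} A) (j : ℕ) :
    extZero k A (j + 2) X Y ↔ extZero k A (j + 1) K Y := by
  rw [extZero_iff k (CRes.append S hB (freeRes K)) Y (j + 1),
    extZero_iff k (freeRes K) Y j]
  exact Iff.rfl

/-- If `Ext¹(X,Y) = 0` then maps `K → Y` extend along `ι : K → B`. -/
lemma extZero_one_lift {K B X : ModuleCat.{u} A} (S : SES K B X) (hB : Projective B)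
    {Y : ModuleCat.{u} A} (h1 : extZero k A 1 X Y) (g : K ⟶ Y) :
    ∃ h : B ⟶ Y, S.ι ≫ h = g := by
  rw [extZero_iff k (CRes.append S hB (freeRes K)) Y 0] at h1
  set Q := freeRes K
  obtain ⟨g', hg'⟩ := h1 (Q.pi ≫ g) (by
    show Q.d 0 ≫ Q.pi ≫ g = 0
    rw [← Category.assoc, Q.dpi, Limits.zero_comp])
  refine ⟨g', ?_⟩
  have hg'' : Q.pi ≫ S.ι ≫ g' = Q.pi ≫ g := by
    have : (Q.pi ≫ S.ι) ≫ g' = Q.pi ≫ g := hg'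
    exact (Category.assoc Q.pi S.ι g').symm.trans this
  apply ModuleCat.hom_ext; apply LinearMap.ext; intro z
  obtain ⟨q, hq⟩ := Q.surj z
  have := congrArg (fun (φ : Q.P 0 ⟶ Y) => φ q) hg''
  simpa [hq] using this

/-- A s.e.s. with projective middle term and a retraction of `ι` has projective quotient. -/
lemma projective_of_retraction {K B X : ModuleCat.{u} A} (S : SES K B X)
    (hB : Projective B) (r : B ⟶ K) (hr : S.ι ≫ r = 𝟙 K) : Projective X := by
  have hw : ∀ b, S.π b = 0 → (𝟙 B - r ≫ S.ι) b = 0 := by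
    intro b hb
    obtain ⟨z, hz⟩ := S.exact b hb
    have h1 : r (S.ι z) = z := congrArg (fun (φ : K ⟶ K) => φ z) hr
    show b - S.ι (r b) = 0
    rw [← hz, h1, sub_self]
  set s := descend S.π S.surj (𝟙 B - r ≫ S.ι) hw with hs
  have hsπ : s ≫ S.π = 𝟙 X := by
    apply ModuleCat.hom_ext; apply LinearMap.ext; intro x
    obtain ⟨b, hb⟩ := S.surj x
    have h1 : s (S.π b) = b - S.ι (r b) := descend_apply _ _ _ _ b
    show S.π (s x) = x
    rw [← hb, h1, map_sub, S.pi_iota, sub_zero]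
  constructor
  intro E W f e he
  refine ⟨s ≫ Projective.factorThru (S.π ≫ f) e, ?_⟩
  rw [Category.assoc, Projective.factorThru_comp, ← Category.assoc, hsπ, Category.id_comp]

/-- LES chase: `Ext^i(W,B) = 0` and `Ext^{i+1}(W,K) = 0` imply `Ext^i(W,X) = 0`. -/
lemma les_a {K B X : ModuleCat.{u} A} (S : SES K B X) (W : ModuleCat.{u} A) (j : ℕ)
    (hB : extZero k A (j + 1) W B) (hK : extZero k A (j + 2) W K) :
    extZero k A (j + 1) W X := by
  set R := freeRes W
  have epiπ : Epi S.π := (ModuleCat.epi_iff_surjective _).2 S.surj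
  rw [extZero_iff k R B j] at hB
  rw [extZero_iff k R K (j + 1)] at hK
  rw [extZero_iff k R X j]
  intro f hf
  haveI := R.proj (j + 1)
  set f' := Projective.factorThru f S.π with hf'def
  have hf' : f' ≫ S.π = f := Projective.factorThru_comp _ _
  have h1 : ∀ p, S.π ((R.d (j + 1) ≫ f') p) = 0 := by
    apply comp_zero_pointwise
    rw [Category.assoc, hf', hf]
  set c := S.lift (R.d (j + 1) ≫ f') h1 with hcdef
  have hc : c ≫ S.ι = R.d (j + 1) ≫ f' := S.lift_comp_iota _ _
  have hcyc : R.d (j + 2) ≫ c = 0 := by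
    apply cancel_iota S
    rw [Category.assoc, hc, Limits.zero_comp, ← Category.assoc, R.dd, Limits.zero_comp]
  obtain ⟨e, he⟩ := hK c hcyc
  have h2 : R.d (j + 1) ≫ (f' - e ≫ S.ι) = 0 := by
    rw [Preadditive.comp_sub, ← Category.assoc, he, hc, sub_self]
  obtain ⟨g, hg⟩ := hB (f' - e ≫ S.ι) h2
  refine ⟨g ≫ S.π, ?_⟩
  rw [← Category.assoc, hg, Preadditive.sub_comp, hf', Category.assoc, S.comp,
    Limits.comp_zero, sub_zero]

/-- LES chase: `Ext^{i}(W,B) = 0` and `Ext^{i-1}(W,X) = 0` imply `Ext^{i}(W,K) = 0`, `i ≥ 2`. -/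
lemma les_b {K B X : ModuleCat.{u} A} (S : SES K B X) (W : ModuleCat.{u} A) (j : ℕ)
    (hB : extZero k A (j + 2) W B) (hX : extZero k A (j + 1) W X) :
    extZero k A (j + 2) W K := by
  set R := freeRes W
  have epiπ : Epi S.π := (ModuleCat.epi_iff_surjective _).2 S.surj
  rw [extZero_iff k R B (j + 1)] at hB
  rw [extZero_iff k R X j] at hX
  rw [extZero_iff k R K (j + 1)]
  intro f hf
  obtain ⟨e, he⟩ := hB (f ≫ S.ι) (by rw [← Category.assoc, hf, Limits.zero_comp])
  obtain ⟨g, hg⟩ := hX (e ≫ S.π) (by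
    rw [← Category.assoc, he, Category.assoc, S.comp, Limits.comp_zero])
  haveI := R.proj j
  set gt := Projective.factorThru g S.π with hgtdef
  have hgt : gt ≫ S.π = g := Projective.factorThru_comp _ _
  have h1 : ∀ p, S.π ((e - R.d j ≫ gt) p) = 0 := by
    apply comp_zero_pointwise
    rw [Preadditive.sub_comp, Category.assoc, hgt, hg, sub_self]
  set u := S.lift (e - R.d j ≫ gt) h1 with hudef
  have hu : u ≫ S.ι = e - R.d j ≫ gt := S.lift_comp_iota _ _
  refine ⟨u, ?_⟩
  apply cancel_iota S
  rw [Category.assoc, hu, Preadditive.comp_sub, he, ← Category.assoc, R.dd,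
    Limits.zero_comp, sub_zero]

/-- LES chase in low degree, using an approximation hypothesis. -/
lemma les_c {K B X : ModuleCat.{u} A} (S : SES K B X) (W : ModuleCat.{u} A)
    (hB : extZero k A 1 W B) (happrox : ∀ g : W ⟶ X, ∃ h : W ⟶ B, h ≫ S.π = g) :
    extZero k A 1 W K := by
  set R := freeRes W
  rw [extZero_iff k R B 0] at hB
  rw [extZero_iff k R K 0]
  intro f hf
  obtain ⟨e, he⟩ := hB (f ≫ S.ι) (by rw [← Category.assoc, hf, Limits.zero_comp])
  have hu0 : R.d 0 ≫ (e ≫ S.π) = 0 := by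
    rw [← Category.assoc, he, Category.assoc, S.comp, Limits.comp_zero]
  have hker : ∀ p, R.pi p = 0 → (e ≫ S.π) p = 0 := by
    intro p hp
    obtain ⟨y, hy⟩ := R.exact0 p hp
    rw [← hy]
    exact comp_zero_pointwise hu0 y
  set v := descend R.pi R.surj (e ≫ S.π) hker with hvdef
  have hv : R.pi ≫ v = e ≫ S.π := descend_comp _ _ _ _
  obtain ⟨hb, hhb⟩ := happrox v
  have h1 : ∀ p, S.π ((e - R.pi ≫ hb) p) = 0 := by
    apply comp_zero_pointwise
    rw [Preadditive.sub_comp, Category.assoc, hhb, hv, sub_self]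
  set w := S.lift (e - R.pi ≫ hb) h1 with hwdef
  have hw : w ≫ S.ι = e - R.pi ≫ hb := S.lift_comp_iota _ _
  refine ⟨w, ?_⟩
  apply cancel_iota S
  rw [Category.assoc, hw, Preadditive.comp_sub, he, ← Category.assoc, R.dpi,
    Limits.zero_comp, sub_zero]

/-- Ext vanishing passes to retracts in the second variable. -/
lemma extZero_retract {W Y Z : ModuleCat.{u} A} (s : Y ⟶ Z) (r : Z ⟶ Y)
    (hsr : s ≫ r = 𝟙 Y) (j : ℕ) (h : extZero k A (j + 1) W Z) :
    extZero k A (j + 1) W Y := by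
  set R := freeRes W
  rw [extZero_iff k R Z j] at h
  rw [extZero_iff k R Y j]
  intro f hf
  obtain ⟨e, he⟩ := h (f ≫ s) (by rw [← Category.assoc, hf, Limits.zero_comp])
  refine ⟨e ≫ r, ?_⟩
  rw [← Category.assoc, he, Category.assoc, hsr, Category.comp_id]

/-- Ext vanishing for finite biproducts in the second variable. -/
lemma extZero_biproduct {W : ModuleCat.{u} A} (m : ℕ) (φ : Fin m → ModuleCat.{u} A)
    (j : ℕ) (h : ∀ l, extZero k A (j + 1) W (φ l)) :
    extZero k A (j + 1) W (⨁ φ) := by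
  set R := freeRes W
  rw [extZero_iff k R (⨁ φ) j]
  intro f hf
  have hl : ∀ l, ∃ g : R.P j ⟶ φ l, R.d j ≫ g = f ≫ biproduct.π φ l := by
    intro l
    have := h l
    rw [extZero_iff k R (φ l) j] at this
    exact this (f ≫ biproduct.π φ l) (by rw [← Category.assoc, hf, Limits.zero_comp])
  choose g hg using hl
  refine ⟨biproduct.lift g, ?_⟩
  apply biproduct.hom_ext
  intro l
  rw [Category.assoc, biproduct.lift_π, hg]

/-- Ext vanishing for binary biproducts in the second variable. -/
lemma extZero_biprod {W U V : ModuleCat.{u} A} (j : ℕ)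
    (hU : extZero k A (j + 1) W U) (hV : extZero k A (j + 1) W V) :
    extZero k A (j + 1) W (U ⊞ V) := by
  set R := freeRes W
  rw [extZero_iff k R U j] at hU
  rw [extZero_iff k R V j] at hV
  rw [extZero_iff k R (U ⊞ V) j]
  intro f hf
  obtain ⟨g₁, hg₁⟩ := hU (f ≫ biprod.fst) (by rw [← Category.assoc, hf, Limits.zero_comp])
  obtain ⟨g₂, hg₂⟩ := hV (f ≫ biprod.snd) (by rw [← Category.assoc, hf, Limits.zero_comp])
  refine ⟨biprod.lift g₁ g₂, ?_⟩
  apply biprod.hom_ext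
  · rw [Category.assoc, biprod.lift_fst, hg₁]
  · rw [Category.assoc, biprod.lift_snd, hg₂]

end ExtLemmas

section Inj

/-- Ext vanishing against an injective module. -/
lemma extZero_of_injective {Y : ModuleCat.{u} A} (hY : Module.Injective A Y)
    (X : ModuleCat.{u} A) (j : ℕ) : extZero k A (j + 1) X Y := by
  set R := freeRes X
  rw [extZero_iff k R Y j]
  intro f hf
  set Rng := ModuleCat.of A ↥(LinearMap.range (R.d j).hom) with hRng
  set ρ : R.P (j + 1) ⟶ Rng := ModuleCat.ofHom (R.d j).hom.rangeRestrict with hρ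
  have hρs : Function.Surjective ρ := LinearMap.surjective_rangeRestrict _
  have hkill : ∀ p, ρ p = 0 → f p = 0 := by
    intro p hp
    have hd : R.d j p = 0 := by
      calc R.d j p = (ρ p).1 := rfl
      _ = 0 := by rw [hp]; rfl
    obtain ⟨y, hy⟩ := R.exact j p hd
    rw [← hy]
    exact comp_zero_pointwise hf y
  set φ := descend ρ hρs f hkill with hφ
  obtain ⟨g', hg'⟩ := hY.out
    ((LinearMap.range (R.d j).hom).subtype : Rng →ₗ[A] R.P j)
    (Submodule.injective_subtype _) φ.hom
  refine ⟨ModuleCat.ofHom g', ?_⟩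
  apply ModuleCat.hom_ext; apply LinearMap.ext; intro p
  show g' (R.d j p) = f p
  have h1 : (LinearMap.range (R.d j).hom).subtype (ρ p) = R.d j p := rfl
  rw [← h1, hg' (ρ p)]
  exact descend_apply ρ hρs f hkill p

/-- Baer's criterion from vanishing of `Ext¹` against the cyclic modules. -/
lemma baer_of_ext_one {Y : ModuleCat.{u} A}
    (h : ∀ I : Ideal A, extZero k A 1 (ModuleCat.of A (A ⧸ I)) Y) :
    Module.Baer A Y := by
  intro I g
  set K := ModuleCat.of A ↥I
  set B := ModuleCat.of A A
  set XI := ModuleCat.of A (A ⧸ I)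
  let S : SES K B XI :=
    { ι := ModuleCat.ofHom I.subtype
      π := ModuleCat.ofHom I.mkQ
      inj := Submodule.injective_subtype I
      surj := Submodule.mkQ_surjective I
      comp := by
        apply ModuleCat.hom_ext; apply LinearMap.ext; intro x
        show I.mkQ x.1 = 0
        exact (Submodule.Quotient.mk_eq_zero _).2 x.2
      exact := fun b hb => by
        have hbI : b ∈ I := (Submodule.Quotient.mk_eq_zero _).1 hb
        exact ⟨⟨b, hbI⟩, rfl⟩ }
  have hB : Projective B := ModuleCat.projective_of_free (Module.Basis.singleton PUnit.{u+1} A)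
  obtain ⟨h', hh'⟩ := extZero_one_lift k S hB (h I) (ModuleCat.ofHom g)
  refine ⟨h'.hom, fun x hx => ?_⟩
  have h3 := congrArg (fun (φ : K ⟶ Y) => φ ⟨x, hx⟩) hh'
  exact h3

/-- Every module embeds in an injective with concrete quotient. -/
lemma exists_inj_ses (Y : ModuleCat.{u} A) :
    ∃ (E Z : ModuleCat.{u} A) (S : SES Y E Z), Module.Injective A E := by
  set E := Injective.under Y
  set ι := Injective.ι Y
  have hmono : Function.Injective ι := by
    rw [← ModuleCat.mono_iff_injective]
    infer_instance
  set Z := ModuleCat.of A (↥E ⧸ LinearMap.range ι.hom)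
  refine ⟨E, Z, ?_, ?_⟩
  · exact
    { ι := ι
      π := ModuleCat.ofHom (LinearMap.range ι.hom).mkQ
      inj := hmono
      surj := Submodule.mkQ_surjective _
      comp := by
        apply ModuleCat.hom_ext; apply LinearMap.ext; intro y
        show Submodule.Quotient.mk (ι y) = (0 : Z)
        rw [Submodule.Quotient.mk_eq_zero]
        exact ⟨y, rfl⟩
      exact := fun b hb => by
        have : b ∈ LinearMap.range ι.hom := by
          rwa [← Submodule.Quotient.mk_eq_zero]
        exact this }
  · haveI : CategoryTheory.Injective (ModuleCat.of A ↥E) := inferInstanceAs (Injective E)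
    exact Module.injective_module_of_injective_object A ↥E

/-- Vanishing of Ext above `e` against arbitrary modules follows from vanishing against
finitely generated ones. -/
lemma glob : ∀ (e : ℕ) (Y : ModuleCat.{u} A),
    (∀ X' : ModuleCat.{u} A, Module.Finite A X' → ∀ i, e < i → extZero k A i X' Y) →
    ∀ (X : ModuleCat.{u} A) (i : ℕ), e < i → extZero k A i X Y := by
  intro e
  induction e with
  | zero =>
    intro Y h X i hi
    have hinj : Module.Injective A Y := by
      refine Module.Baer.injective (baer_of_ext_one k ?_)
      intro I
      exact h (ModuleCat.of A (A ⧸ I))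
        (Module.Finite.of_surjective (M := (A : Type u)) I.mkQ (Submodule.mkQ_surjective I))
        1 Nat.one_pos
    obtain ⟨j, rfl⟩ : ∃ j, i = j + 1 := ⟨i - 1, by omega⟩
    exact extZero_of_injective k hinj X j
  | succ e ih =>
    intro Y h X i hi
    obtain ⟨E, Z, S, hE⟩ := exists_inj_ses Y
    have hZ : ∀ X' : ModuleCat.{u} A, Module.Finite A X' → ∀ i, e < i →
        extZero k A i X' Z := by
      intro X' hfg i hi'
      obtain ⟨j, rfl⟩ : ∃ j, i = j + 1 := ⟨i - 1, by omega⟩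
      exact les_a k S X' j (extZero_of_injective k hE X' j)
        (h X' hfg (j + 2) (by omega))
    have hZall := ih Z hZ
    obtain ⟨j, rfl⟩ : ∃ j, i = j + 2 := ⟨i - 2, by omega⟩
    exact les_b k S X j (extZero_of_injective k hE X (j + 1))
      (hZall X (j + 1) (by omega))

end Inj

section FG

/-- A finitely generated cover of a finitely generated module over a Noetherian ring. -/
lemma exists_fg_ses [IsNoetherianRing A] (X : ModuleCat.{u} A) (hX : Module.Finite A X) :
    ∃ (K F : ModuleCat.{u} A) (S : SES K F X),
      Projective F ∧ Module.Finite A F ∧ Module.Finite A K := by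
  obtain ⟨r, p, hp⟩ := @Module.Finite.exists_fin' A X _ _ _ hX
  set F := ModuleCat.of A (Fin r → A)
  set K := ModuleCat.of A ↥(LinearMap.ker p)
  refine ⟨K, F, ?_, ?_, ?_, ?_⟩
  · exact
    { ι := ModuleCat.ofHom (LinearMap.ker p).subtype
      π := ModuleCat.ofHom p
      inj := Submodule.injective_subtype _
      surj := hp
      comp := by
        apply ModuleCat.hom_ext; apply LinearMap.ext; intro x
        exact x.2
      exact := fun b hb => ⟨⟨b, hb⟩, rfl⟩ }
  · exact ModuleCat.projective_of_free (Pi.basisFun A (Fin r))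
  · exact inferInstanceAs (Module.Finite A (Fin r → A))
  · haveI : IsNoetherian A (Fin r → A) := inferInstance
    exact Module.Finite.iff_fg.2 (IsNoetherian.noetherian _)

/-- Iterated dimension shifting: the `t`-th syzygy of a finitely generated module. -/
lemma shift_chain [IsNoetherianRing A] (t : ℕ) (X : ModuleCat.{u} A)
    (hX : Module.Finite A X) :
    ∃ Ω : ModuleCat.{u} A, Module.Finite A Ω ∧
      (∃ (K F : ModuleCat.{u} A) (S : SES K F Ω), Projective F ∧ Module.Finite A K) ∧
      ∀ (Y : ModuleCat.{u} A) (j : ℕ),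
        extZero k A (j + 1 + t) X Y ↔ extZero k A (j + 1) Ω Y := by
  induction t generalizing X with
  | zero =>
    obtain ⟨K, F, S, hF, _, hKfg⟩ := exists_fg_ses X hX
    exact ⟨X, hX, ⟨K, F, S, hF, hKfg⟩, fun Y j => Iff.rfl⟩
  | succ t ih =>
    obtain ⟨Ω, hΩfg, ⟨K, F, S, hF, hKfg⟩, hiff⟩ := ih X hX
    obtain ⟨K', F', S', hF', _, hK'fg⟩ := exists_fg_ses K hKfg
    refine ⟨K, hKfg, ⟨K', F', S', hF', hK'fg⟩, fun Y j => ?_⟩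
    have e1 : j + 1 + (t + 1) = (j + 1 + 1) + t := by omega
    rw [e1, hiff Y (j + 1)]
    exact extZero_shift k S hF Y j

/-- If `Ext¹(X, ΩX) = 0` for the syzygy then `X` is projective. -/
lemma projective_of_ext_one_syzygy {K F X : ModuleCat.{u} A} (S : SES K F X)
    (hF : Projective F) (h1 : extZero k A 1 X K) : Projective X := by
  obtain ⟨r, hr⟩ := extZero_one_lift k S hF h1 (𝟙 K)
  exact projective_of_retraction S hF r hr

end FG

section Add
open ZeroObject

variable (M : ModuleCat.{u} A)

/-- `M` is isomorphic to the biproduct over `Fin 1` of copies of `M`. -/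
def selfFinOne : M ≅ ⨁ (fun _ : Fin 1 => M) where
  hom := biproduct.lift (fun _ => 𝟙 M)
  inv := biproduct.π _ 0
  hom_inv_id := biproduct.lift_π _ _
  inv_hom_id := by
    apply biproduct.hom_ext
    intro l
    rw [Category.assoc, biproduct.lift_π, Category.comp_id, Category.id_comp]
    congr 1
    exact Subsingleton.elim _ _

/-- `M ⊞ 0 ≅ M`. -/
def biprodZero : (M ⊞ (0 : ModuleCat.{u} A)) ≅ M where
  hom := biprod.fst
  inv := biprod.inl
  hom_inv_id := by
    apply biprod.hom_ext'
    · rw [← Category.assoc, biprod.inl_fst, Category.id_comp, Category.comp_id]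
    · apply (Limits.isZero_zero _).eq_of_src
  inv_hom_id := biprod.inl_fst

end Add

section AddExt
open ZeroObject

/-- Ext vanishing (second variable) for modules in `add M`. -/
lemma extZero_of_inAdd {M Y W : ModuleCat.{u} A} (hY : InAdd A {M} Y) (j : ℕ)
    (hM : extZero k A (j + 1) W M) : extZero k A (j + 1) W Y := by
  obtain ⟨Y', m, φ, hmem, ⟨e⟩⟩ := hY
  have hl : ∀ l, extZero k A (j + 1) W (φ l) := by
    intro l
    have h1 : φ l = M := hmem l
    rw [h1]; exact hM
  have hsum := extZero_biproduct k m φ j hl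
  refine extZero_retract k (biprod.inl ≫ e.hom) (e.inv ≫ biprod.fst) ?_ j hsum
  rw [Category.assoc, ← Category.assoc e.hom, e.hom_inv_id, Category.id_comp, biprod.inl_fst]

lemma inAdd_self (M : ModuleCat.{u} A) : InAdd A {M} M :=
  ⟨0, 1, fun _ => M, fun _ => rfl, ⟨(biprodZero M) ≪≫ selfFinOne M⟩⟩

lemma inAdd_of_isSummand {M X : ModuleCat.{u} A} (h : IsSummand A X M) : InAdd A {M} X := by
  obtain ⟨Y, ⟨e⟩⟩ := h
  exact ⟨Y, 1, fun _ => M, fun _ => rfl, ⟨e.symm ≪≫ selfFinOne M⟩⟩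

end AddExt

section Main

variable {n : ℕ} {M : ModuleCat.{u} A}

/-- Step A: if `id M ≤ d` then `Ext^i(X, Y) = 0` for `i > d` and `Y` f.g. -/
lemma stepA [IsNoetherianRing A] (hn : 1 ≤ n) (hM : IsNCTObject k A n M) (d : ℕ)
    (hid : ∀ i, d < i → ∀ Y : ModuleCat.{u} A, extZero k A i Y M) :
    ∀ Y : ModuleCat.{u} A, Module.Finite A Y → ∀ i, d < i → ∀ X : ModuleCat.{u} A,
      extZero k A i X Y := by
  obtain ⟨hMfg, hfin, happrox, _, hcond4, hcond5⟩ := hM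
  set C : Set (ModuleCat.{u} A) := {X | InAdd A {M} X} with hC
  -- finitely generated projectives belong to `C`
  have hprojC : ∀ Q : ModuleCat.{u} A, Module.Finite A Q → Projective Q → Q ∈ C := by
    intro Q hQfg hQproj
    rw [hcond4 Q]
    refine ⟨hQfg, fun i h0 hin Y hY => ?_⟩
    obtain ⟨jj, rfl⟩ : ∃ jj, i = jj + 1 := ⟨i - 1, by omega⟩
    exact extZero_of_projective k Q Y hQproj jj
  have key : ∀ j : ℕ, ∀ Y : ModuleCat.{u} A, Module.Finite A Y →
      (∀ W ∈ C, ∀ i, 0 < i → i ≤ (n - 1) - j → extZero k A i W Y) →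
      ∀ i, d < i → ∀ X : ModuleCat.{u} A, extZero k A i X Y := by
    intro j
    induction j with
    | zero =>
      intro Y hfg hD
      have hYC : Y ∈ C := by
        rw [hcond5 Y]
        exact ⟨hfg, fun i h0 hin W hW => hD W hW i h0 (by omega)⟩
      intro i hi X
      obtain ⟨jj, rfl⟩ : ∃ jj, i = jj + 1 := ⟨i - 1, by omega⟩
      exact extZero_of_inAdd k hYC jj (hid (jj + 1) hi X)
    | succ j ih =>
      intro Y hfg hD
      by_cases hsat : n - 1 - j = n - 1 - (j + 1)
      · exact ih Y hfg (fun W hW i h0 hle => hD W hW i h0 (by omega))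
      have hge : 1 ≤ n - 1 - j := by omega
      -- build the approximation s.e.s.
      obtain ⟨C₀, hC₀, aprx, haprx⟩ := happrox Y hfg
      obtain ⟨r, p, hpsurj⟩ := Module.Finite.exists_fin' (R := A) (M := Y)
      set F := ModuleCat.of A (Fin r → A) with hF
      have hFproj : Projective F := ModuleCat.projective_of_free (Pi.basisFun A (Fin r))
      have hFfg : Module.Finite A F := inferInstanceAs (Module.Finite A (Fin r → A))
      have hFC : F ∈ C := hprojC F hFfg hFproj
      set B := C₀ ⊞ F with hB
      set πB : B ⟶ Y := biprod.desc aprx (ModuleCat.ofHom p) with hπB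
      have hsurjB : Function.Surjective πB := by
        rw [← ModuleCat.epi_iff_surjective]
        have h1 : biprod.inr ≫ πB = (ModuleCat.ofHom p) := biprod.inr_desc _ _
        haveI : Epi (biprod.inr ≫ πB) := by
          rw [h1]; exact (ModuleCat.epi_iff_surjective _).2 hpsurj
        exact epi_of_epi biprod.inr πB
      set K := ModuleCat.of A ↥(LinearMap.ker πB.hom) with hK
      obtain ⟨S, hSπ⟩ : ∃ S : SES K B Y, S.π = πB :=
        ⟨{ ι := ModuleCat.ofHom (LinearMap.ker πB.hom).subtype
           π := πB
           inj := Submodule.injective_subtype _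
           surj := hsurjB
           comp := by apply ModuleCat.hom_ext; apply LinearMap.ext; intro x; exact x.2
           exact := fun b hb => ⟨⟨b, hb⟩, rfl⟩ }, rfl⟩
      have hBfg : Module.Finite A B := by
        have e : (B : Type u) ≃ₗ[A] (↥C₀ × ↥F) :=
          (ModuleCat.biprodIsoProd C₀ F).toLinearEquiv
        haveI : Module.Finite A (↥C₀ × ↥F) := by
          haveI := hfin C₀ hC₀
          infer_instance
        exact Module.Finite.equiv e.symm
      have hKfg : Module.Finite A K := by
        haveI := hBfg
        haveI : IsNoetherian A B := isNoetherian_of_isNoetherianRing_of_finite A B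
        exact Module.Finite.iff_fg.2 (IsNoetherian.noetherian _)
      -- Ext vanishing against `B` for modules of `C`
      have hWB : ∀ W ∈ C, ∀ i', 0 < i' → i' < n → extZero k A i' W B := by
        intro W hW i' h0 hin
        obtain ⟨jj, rfl⟩ : ∃ jj, i' = jj + 1 := ⟨i' - 1, by omega⟩
        have h1 := ((hcond4 W).1 hW).2 (jj + 1) h0 hin C₀ hC₀
        have h2 := ((hcond4 W).1 hW).2 (jj + 1) h0 hin F hFC
        exact extZero_biprod k jj h1 h2
      have hDK : ∀ W ∈ C, ∀ i, 0 < i → i ≤ (n - 1) - j → extZero k A i W K := by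
        intro W hW i h0 hle
        have hin : i < n := by omega
        match i, h0 with
        | 1, _ =>
          refine les_c k S W (hWB W hW 1 Nat.one_pos (by omega)) ?_
          intro g
          obtain ⟨h₀, hh₀⟩ := haprx W hW g
          refine ⟨h₀ ≫ biprod.inl, ?_⟩
          rw [Category.assoc, hSπ, hπB, biprod.inl_desc]
          exact hh₀
        | (jj+2), _ =>
          exact les_b k S W jj (hWB W hW (jj + 2) (by omega) hin)
            (hD W hW (jj + 1) (by omega) (by omega))
      have ihK := ih K hKfg hDK
      intro i hi X
      obtain ⟨jj, rfl⟩ : ∃ jj, i = jj + 1 := ⟨i - 1, by omega⟩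
      have hXB : extZero k A (jj + 1) X B :=
        extZero_biprod k jj (extZero_of_inAdd k hC₀ jj (hid (jj + 1) hi X))
          (extZero_of_inAdd k hFC jj (hid (jj + 1) hi X))
      exact les_a k S X jj hXB (ihK (jj + 2) (by omega) X)
  intro Y hfg
  exact key (n - 1) Y hfg (fun W hW i h0 hle => by omega)

/-- A f.g. module with vanishing higher Ext and vanishing Ext against f.g. projectives
is projective. -/
lemma pred [IsNoetherianRing A] :
    ∀ (m : ℕ) (X : ModuleCat.{u} A), Module.Finite A X →
      (∀ i, m < i → ∀ Y : ModuleCat.{u} A, extZero k A i X Y) →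
      (∀ i, 0 < i → i ≤ m → ∀ Q : ModuleCat.{u} A, Module.Finite A Q → Projective Q →
        extZero k A i X Q) →
      Projective X := by
  intro m
  induction m with
  | zero =>
    intro X hfg hp _
    obtain ⟨K, F, S, hF, _, hKfg⟩ := exists_fg_ses X hfg
    exact projective_of_ext_one_syzygy k S hF (hp 1 Nat.one_pos K)
  | succ m ih =>
    intro X hfg hp hext
    obtain ⟨K, F, S, hF, _, hKfg⟩ := exists_fg_ses X hfg
    have hpK : ∀ i, m < i → ∀ Y : ModuleCat.{u} A, extZero k A i K Y := by
      intro i hi Y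
      obtain ⟨jj, rfl⟩ : ∃ jj, i = jj + 1 := ⟨i - 1, by omega⟩
      exact (extZero_shift k S hF Y jj).1 (hp (jj + 2) (by omega) Y)
    have hextK : ∀ i, 0 < i → i ≤ m → ∀ Q : ModuleCat.{u} A, Module.Finite A Q →
        Projective Q → extZero k A i K Q := by
      intro i h0 hle Q hQfg hQproj
      obtain ⟨jj, rfl⟩ : ∃ jj, i = jj + 1 := ⟨i - 1, by omega⟩
      exact (extZero_shift k S hF Q jj).1 (hext (jj + 2) (by omega) (by omega) Q hQfg hQproj)
    have hKproj := ih K hKfg hpK hextK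
    exact projective_of_ext_one_syzygy k S hF
      (hext 1 Nat.one_pos (by omega) K hKfg hKproj)

end Main

end Gen
end CT

/-- If `M` is an `n`-cluster tilting object of `mod A`, then
`gl.dim A = id M_A`, and every indecomposable direct summand of `M` is either
projective or has projective dimension at least `n`. -/
theorem gldim_eq_id_of_cluster_tilting
    [FiniteDimensional k A] (n : ℕ) (hn : 1 ≤ n)
    (M : ModuleCat.{u} A) (hM : IsNCTObject k A n M) :
    (∀ d : ℕ, gldimLE k A d ↔ idLE k A M d) ∧
    (∀ X : ModuleCat.{u} A, Indec A X → IsSummand A X M →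
      (Projective X ∨ ∀ m : ℕ, m < n → ¬ pdLE k A X m)) := by
  haveI : IsNoetherianRing A := by
    have h1 : IsNoetherian k A := isNoetherian_of_isNoetherianRing_of_finite k A
    exact isNoetherianRing_iff.2 (isNoetherian_of_tower k h1)
  constructor
  · intro d
    constructor
    · intro hgl i hi Y
      exact hgl i hi Y M
    · intro hid i hi X Y
      have R1 := CT.stepA k hn hM d hid
      have R2 : ∀ X' : ModuleCat.{u} A, Module.Finite A X' → ∀ i', d < i' →
          ∀ Y' : ModuleCat.{u} A, extZero k A i' X' Y' := by
        intro X' hfg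
        obtain ⟨Ω, hΩfg, ⟨K, F, S, hF, hKfg⟩, hiff⟩ := CT.shift_chain k d X' hfg
        have hΩproj : Projective Ω :=
          CT.projective_of_ext_one_syzygy k S hF
            ((hiff K 0).1 (R1 K hKfg (0 + 1 + d) (by omega) X'))
        intro i' hi' Y'
        obtain ⟨jj, hjj⟩ : ∃ jj, i' = jj + 1 + d := ⟨i' - d - 1, by omega⟩
        rw [hjj, hiff Y' jj]
        exact CT.extZero_of_projective k Ω Y' hΩproj jj
      exact CT.glob k d Y (fun X'' hfg i' hi' => R2 X'' hfg i' hi' Y) X i hi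
  · intro X _ hsum
    by_cases hex : ∃ m, m < n ∧ pdLE k A X m
    · left
      obtain ⟨m, hmn, hpd⟩ := hex
      obtain ⟨hMfg, hfin, _, _, hcond4, hcond5⟩ := hM
      have hXC : InAdd A {M} X := CT.inAdd_of_isSummand hsum
      have hXfg : Module.Finite A X := hfin X hXC
      refine CT.pred k m X hXfg (fun i' hi' Y => hpd i' hi' Y) ?_
      intro i h0 hle Q hQfg hQproj
      have hQC : Q ∈ {Z : ModuleCat.{u} A | InAdd A {M} Z} := by
        rw [hcond4 Q]
        refine ⟨hQfg, fun i' h0' hn' Y hY => ?_⟩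
        obtain ⟨jj, rfl⟩ : ∃ jj, i' = jj + 1 := ⟨i' - 1, by omega⟩
        exact CT.extZero_of_projective k Q Y hQproj jj
      exact ((hcond4 X).1 hXC).2 i h0 (by omega) Q hQC
    · right
      intro m hmn hpd
      exact hex ⟨m, hmn, hpd⟩
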